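/- Let (P,s,v) be an α-signed differential poset and for k, n ≥ 0 set τ_{k,n} = ∑_{x ∈ P_n} v(x)·⟨D^k 𝐏_{n+k}, x⟩, where 𝐏_m = ∑_{y ∈ P_m} y (and τ_{k,n} = 0 for n < 0). Then for all n ≥ 0: τ_{1,n} + τ_{1,n−1} = ∑_{x ∈ P_n} v(x), and τ_{k,n} = 0 for every k ≥ 2. Equivalently, with G(P,t) = ∑_{x∈P} v(x) t^{ρ(x)} and G_k(P,t) = ∑_{n≥0} τ_{k,n} t^n as formal power series, (1+t)·G_1(P,t) = G(P,t) and G_k(P,t) = 0 for k ≥ 2. -/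
import Mathlib

set_option linter.unusedSectionVars false


open scoped Classical

namespace SDP

variable {P : Type*} [PartialOrder P] [OrderBot P]

/-- The sign of a saturated chain, recorded as a list: the product of the
edge signs `s` over consecutive pairs. -/
def chainSign {α : Type*} (s : α → α → ℤ) : List α → ℤ
  | [] => 1
  | [_] => 1
  | x :: y :: rest => s x y * chainSign s (y :: rest)

/-- Maximal chains from `⊥` to `x`: lists whose consecutive entries are covers,
starting at `⊥` and ending at `x`. -/
def chainsTo (x : P) : Set (List P) :=
  {l : List P | l.Chain' (· ⋖ ·) ∧ l.head? = some (⊥ : P) ∧ l.getLast? = some x}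

/-- `e(x)`: the signed sum of maximal chains from `⊥` to `x`. -/
noncomputable def e (s : P → P → ℤ) (x : P) : ℤ :=
  ∑ᶠ l ∈ chainsTo x, chainSign s l

variable (K : Type*) [Field K]

/-- The up operator on `K̂P`, written coefficientwise:
`(U f)(y) = ∑_{x ⋖ y} s(x ⋖ y) f(x)`. -/
noncomputable def Uop (s : P → P → ℤ) (f : P → K) : P → K :=
  fun y => ∑ᶠ x ∈ {x : P | x ⋖ y}, (s x y : K) * f x

/-- The down operator on `K̂P`, written coefficientwise:
`(D f)(x) = ∑_{y ⋗ x} s(x ⋖ y) v(y) v(x) f(y)`. -/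
noncomputable def Dop (s : P → P → ℤ) (v : P → ℤ) (f : P → K) : P → K :=
  fun x => ∑ᶠ y ∈ {y : P | x ⋖ y}, (s x y : K) * (v y : K) * (v x : K) * f y

variable [GradeMinOrder ℕ P]

/-- `(P, s, v)` is a signed poset: edge labels and vertex labels are signs, and
each rank of the graded poset `P` is finite. -/
def IsSignedPoset (s : P → P → ℤ) (v : P → ℤ) : Prop :=
  (∀ x y : P, x ⋖ y → s x y = 1 ∨ s x y = -1) ∧
  (∀ x : P, v x = 1 ∨ v x = -1) ∧
  (∀ n : ℕ, {x : P | grade ℕ x = n}.Finite)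

/-- Weakly signed differential: `v(0̂) = 1` and `UD + DU = I` on `K̂P`. -/
def WeaklySignedDifferential (s : P → P → ℤ) (v : P → ℤ) : Prop :=
  v ⊥ = 1 ∧ ∀ f : P → K, Uop K s (Dop K s v f) + Dop K s v (Uop K s f) = f

/-- α-signed differential: weakly signed differential and `(U + D)𝐏 = 𝐏`. -/
def AlphaSignedDifferential (s : P → P → ℤ) (v : P → ℤ) : Prop :=
  WeaklySignedDifferential K s v ∧
    Uop K s (fun _ => 1) + Dop K s v (fun _ => 1) = (fun _ => (1 : K))

/-- β-signed differential: weakly signed differential and `(D - U)𝐏 = 𝐏`. -/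
def BetaSignedDifferential (s : P → P → ℤ) (v : P → ℤ) : Prop :=
  WeaklySignedDifferential K s v ∧
    Dop K s v (fun _ => 1) - Uop K s (fun _ => 1) = (fun _ => (1 : K))

end SDP

namespace SDP

variable {P : Type*} [PartialOrder P] [OrderBot P] (K : Type*) [Field K]
variable [GradeMinOrder ℕ P]

/-- `𝐏ₘ = ∑_{y ∈ Pₘ} y`, the indicator vector of the `m`-th rank (empty for `m < 0`). -/
noncomputable def rankIndicator (m : ℤ) : P → K :=
  fun p => if (grade ℕ p : ℤ) = m then 1 else 0

/-- `τ_{k,n} = ∑_{x ∈ Pₙ} v(x) ⟨Dᵏ 𝐏_{n+k}, x⟩` (zero for `n < 0`). -/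
noncomputable def tau (s : P → P → ℤ) (v : P → ℤ) (k : ℕ) (n : ℤ) : K :=
  ∑ᶠ x ∈ {x : P | (grade ℕ x : ℤ) = n},
    (v x : K) * ((Dop K s v)^[k] (rankIndicator K (n + k))) x

end SDP

namespace SDPAux

open SDP

variable {P : Type*} [PartialOrder P] [OrderBot P] [GradeMinOrder ℕ P]
variable (K : Type*) [Field K] {s : P → P → ℤ} {v : P → ℤ}

lemma grade_covBy {x y : P} (h : x ⋖ y) : grade ℕ y = grade ℕ x + 1 :=
  (Order.covBy_iff_add_one_eq.mp (h.grade ℕ)).symm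

variable (P) in
/-- Integer-indexed rank set. -/
def R (n : ℤ) : Set P := {x : P | (grade ℕ x : ℤ) = n}

variable (v) in
/-- The pairing `⟨f, g⟩ₙ = ∑_{x ∈ Pₙ} v x * f x * g x`. -/
noncomputable def pr (n : ℤ) (f g : P → K) : K :=
  ∑ᶠ x ∈ R P n, (v x : K) * f x * g x

variable (s) in
/-- `U^a 𝟏`. -/
noncomputable def up (a : ℕ) : P → K := (Uop K s)^[a] (fun _ => 1)

lemma up_succ (a : ℕ) : up K s (a + 1) = Uop K s (up K s a) :=
  Function.iterate_succ_apply' _ _ _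

lemma up_zero : up K s 0 = (fun _ => (1 : K)) := rfl

section Fin

variable (hfin : ∀ n : ℕ, {x : P | grade ℕ x = n}.Finite)
include hfin

lemma RFinite (n : ℤ) : (R P n).Finite := by
  apply Set.Finite.subset (hfin n.toNat)
  intro x hx
  simp only [R, Set.mem_setOf_eq] at hx ⊢
  omega

lemma covAbove_finite (x : P) : {y : P | x ⋖ y}.Finite := by
  apply Set.Finite.subset (hfin (grade ℕ x + 1))
  intro y hy
  exact grade_covBy hy

lemma covBelow_finite (y : P) : {x : P | x ⋖ y}.Finite := by
  apply Set.Finite.subset (hfin (grade ℕ y - 1))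
  intro x hx
  have := grade_covBy hx
  simp only [Set.mem_setOf_eq]
  omega

lemma pr_eq_sum (n : ℤ) (f g : P → K) :
    pr K v n f g = ∑ x ∈ (RFinite hfin n).toFinset, (v x : K) * f x * g x :=
  finsum_mem_eq_finite_toFinset_sum _ _

lemma Uop_eq_sum (f : P → K) (y : P) :
    Uop K s f y = ∑ x ∈ (covBelow_finite hfin y).toFinset, (s x y : K) * f x :=
  finsum_mem_eq_finite_toFinset_sum _ _

lemma Dop_eq_sum (f : P → K) (x : P) :
    Dop K s v f x
      = ∑ y ∈ (covAbove_finite hfin x).toFinset,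
          (s x y : K) * (v y : K) * (v x : K) * f y :=
  finsum_mem_eq_finite_toFinset_sum _ _

lemma pr_empty {n : ℤ} (hn : n < 0) (f g : P → K) : pr K v n f g = 0 := by
  have hR : R P n = (∅ : Set P) := by
    ext x
    simp only [R, Set.mem_setOf_eq, Set.mem_empty_iff_false, iff_false]
    omega
  unfold pr
  rw [hR, finsum_mem_empty]

lemma pr_comm (n : ℤ) (f g : P → K) : pr K v n f g = pr K v n g f :=
  finsum_mem_congr rfl fun x _ => by ring

lemma pr_sub_left (n : ℤ) (f g h : P → K) :
    pr K v n (f - g) h = pr K v n f h - pr K v n g h := by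
  rw [pr_eq_sum K hfin, pr_eq_sum K hfin, pr_eq_sum K hfin, ← Finset.sum_sub_distrib]
  exact Finset.sum_congr rfl fun x _ => by simp only [Pi.sub_apply]; ring

lemma pr_add_left (n : ℤ) (f g h : P → K) :
    pr K v n (f + g) h = pr K v n f h + pr K v n g h := by
  rw [pr_eq_sum K hfin, pr_eq_sum K hfin, pr_eq_sum K hfin, ← Finset.sum_add_distrib]
  exact Finset.sum_congr rfl fun x _ => by simp only [Pi.add_apply]; ring

lemma pr_sub_right (n : ℤ) (f g h : P → K) :
    pr K v n f (g - h) = pr K v n f g - pr K v n f h := by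
  rw [pr_comm K hfin n f (g - h), pr_sub_left K hfin, pr_comm K hfin n g f,
    pr_comm K hfin n h f]

lemma pr_smul_right (n : ℤ) (c : K) (f g : P → K) :
    pr K v n f (c • g) = c * pr K v n f g := by
  rw [pr_eq_sum K hfin, pr_eq_sum K hfin, Finset.mul_sum]
  exact Finset.sum_congr rfl fun x _ => by
    simp only [Pi.smul_apply, smul_eq_mul]; ring

lemma Uop_sub (f g : P → K) : Uop K s (f - g) = Uop K s f - Uop K s g := by
  funext y
  rw [Pi.sub_apply, Uop_eq_sum K hfin, Uop_eq_sum K hfin, Uop_eq_sum K hfin,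
    ← Finset.sum_sub_distrib]
  exact Finset.sum_congr rfl fun x _ => by simp only [Pi.sub_apply]; ring

lemma Uop_add (f g : P → K) : Uop K s (f + g) = Uop K s f + Uop K s g := by
  funext y
  rw [Pi.add_apply, Uop_eq_sum K hfin, Uop_eq_sum K hfin, Uop_eq_sum K hfin,
    ← Finset.sum_add_distrib]
  exact Finset.sum_congr rfl fun x _ => by simp only [Pi.add_apply]; ring

lemma Dop_sub (f g : P → K) : Dop K s v (f - g) = Dop K s v f - Dop K s v g := by
  funext y
  rw [Pi.sub_apply, Dop_eq_sum K hfin, Dop_eq_sum K hfin, Dop_eq_sum K hfin,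
    ← Finset.sum_sub_distrib]
  exact Finset.sum_congr rfl fun x _ => by simp only [Pi.sub_apply]; ring

lemma Dop_smul (c : K) (f : P → K) : Dop K s v (c • f) = c • Dop K s v f := by
  funext y
  rw [Pi.smul_apply, Dop_eq_sum K hfin, Dop_eq_sum K hfin, smul_eq_mul, Finset.mul_sum]
  exact Finset.sum_congr rfl fun x _ => by
    simp only [Pi.smul_apply, smul_eq_mul]; ring

lemma iterate_congr (k : ℕ) (f g : P → K) (x : P)
    (h : ∀ y : P, grade ℕ y = grade ℕ x + k → f y = g y) :
    (Dop K s v)^[k] f x = (Dop K s v)^[k] g x := by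
  induction k generalizing f g x with
  | zero => simpa using h x (by omega)
  | succ k ih =>
    rw [Function.iterate_succ_apply, Function.iterate_succ_apply]
    apply ih
    intro y hy
    rw [Dop_eq_sum K hfin, Dop_eq_sum K hfin]
    refine Finset.sum_congr rfl fun z hz => ?_
    have hz' : y ⋖ z := by simpa using hz
    have hgz := grade_covBy hz'
    rw [h z (by omega)]

end Fin

lemma adjoint (hsp : IsSignedPoset s v) (n : ℤ) (f g : P → K) :
    pr K v n g (Uop K s f) = pr K v (n - 1) (Dop K s v g) f := by
  classical
  have hfin := hsp.2.2
  have hv1 : ∀ w : P, (v w : K) * (v w : K) = 1 := by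
    intro w; rcases hsp.2.1 w with h | h <;> rw [h] <;> norm_num
  rw [pr_eq_sum K hfin, pr_eq_sum K hfin]
  set A := (RFinite hfin n).toFinset with hA
  set B := (RFinite hfin (n - 1)).toFinset with hB
  have hUB : ∀ x ∈ A, Uop K s f x = ∑ w ∈ B, if w ⋖ x then (s w x : K) * f w else 0 := by
    intro x hx
    have hx' : (grade ℕ x : ℤ) = n := by
      simpa [hA, R] using hx
    rw [Uop_eq_sum K hfin, ← Finset.sum_filter]
    refine Finset.sum_congr ?_ fun _ _ => rfl
    ext w
    simp only [Set.Finite.mem_toFinset, Finset.mem_filter, Set.mem_setOf_eq, hB, R]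
    constructor
    · intro hw
      have := grade_covBy hw
      exact ⟨by omega, hw⟩
    · exact fun h => h.2
  have step1 : ∑ x ∈ A, (v x : K) * g x * Uop K s f x
      = ∑ x ∈ A, ∑ w ∈ B, (if w ⋖ x then (v x : K) * g x * ((s w x : K) * f w) else 0) := by
    refine Finset.sum_congr rfl fun x hx => ?_
    rw [hUB x hx, Finset.mul_sum]
    exact Finset.sum_congr rfl fun w _ => by rw [mul_ite, mul_zero]
  rw [step1, Finset.sum_comm]
  refine Finset.sum_congr rfl fun w hw => ?_
  have hw' : (grade ℕ w : ℤ) = n - 1 := by simpa [hB, R] using hw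
  have hset : (covAbove_finite hfin w).toFinset = A.filter (fun x => w ⋖ x) := by
    ext x
    simp only [Set.Finite.mem_toFinset, Set.mem_setOf_eq, Finset.mem_filter, hA, R]
    constructor
    · intro hx
      have := grade_covBy hx
      exact ⟨by omega, hx⟩
    · exact fun h => h.2
  rw [Dop_eq_sum K hfin, hset, Finset.sum_filter, Finset.mul_sum, Finset.sum_mul]
  refine Finset.sum_congr rfl fun x _ => ?_
  by_cases hwx : w ⋖ x
  · simp only [hwx, if_true]
    linear_combination (-((s w x : K) * (v x : K) * g x * f w)) * hv1 w
  · simp [hwx]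

lemma pr_up_succ (hsp : IsSignedPoset s v) (n : ℤ) (a b : ℕ) :
    pr K v n (up K s a) (up K s (b + 1))
      = pr K v (n - 1) (Dop K s v (up K s a)) (up K s b) := by
  rw [up_succ, adjoint K hsp]

lemma DU_eq (hα : AlphaSignedDifferential K s v) (f : P → K) :
    Dop K s v (Uop K s f) = f - Uop K s (Dop K s v f) := by
  funext x
  have h := congrFun (hα.1.2 f) x
  simp only [Pi.add_apply] at h
  simp only [Pi.sub_apply]
  linear_combination h

lemma Done (hα : AlphaSignedDifferential K s v) :
    Dop K s v (fun _ => (1 : K)) = (fun _ => (1 : K)) - Uop K s (fun _ => (1 : K)) := by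
  funext x
  have h := congrFun hα.2 x
  simp only [Pi.add_apply] at h
  simp only [Pi.sub_apply]
  linear_combination h

lemma Dup (hsp : IsSignedPoset s v) (hα : AlphaSignedDifferential K s v) :
    ∀ a : ℕ,
      (Even a → Dop K s v (up K s a) = up K s a - up K s (a + 1)) ∧
      (Odd a → Dop K s v (up K s a)
        = up K s (a - 1) - up K s a + up K s (a + 1)) := by
  have hfin := hsp.2.2
  intro a
  induction a with
  | zero =>
    constructor
    · intro _
      have h1 : Dop K s v (up K s 0) = (fun _ => (1 : K)) - Uop K s (fun _ => (1 : K)) := by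
        rw [up_zero]; exact Done K hα
      rw [h1, ← up_zero (K := K) (s := s),
        show Uop K s (up K s 0) = up K s 1 from (up_succ K 0).symm]
    · intro h
      exact absurd h (by simp)
  | succ a ih =>
    constructor
    · intro he
      have ho : Odd a := by
        rcases Nat.even_or_odd a with h | h
        · exact absurd he (by simpa [Nat.even_add_one] using h)
        · exact h
      obtain ⟨t, ht⟩ := ho
      rw [up_succ, DU_eq K hα, ih.2 ⟨t, ht⟩, Uop_add K hfin, Uop_sub K hfin,
        ← up_succ, ← up_succ, ← up_succ, show a - 1 + 1 = a from by omega]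
      abel
    · intro ho
      have he : Even a := by
        obtain ⟨t, ht⟩ := ho
        exact ⟨t, by omega⟩
      rw [up_succ, DU_eq K hα, ih.1 he, Uop_sub K hfin, ← up_succ, ← up_succ,
        show a + 1 - 1 = a from rfl]
      abel

lemma DopUp_even (hsp : IsSignedPoset s v) (hα : AlphaSignedDifferential K s v)
    {a : ℕ} (ha : Even a) :
    Dop K s v (up K s a) = up K s a - up K s (a + 1) :=
  (Dup K hsp hα a).1 ha

lemma DopUp_odd (hsp : IsSignedPoset s v) (hα : AlphaSignedDifferential K s v)
    {a : ℕ} (ha : Odd a) :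
    Dop K s v (up K s a) = up K s (a - 1) - up K s a + up K s (a + 1) :=
  (Dup K hsp hα a).2 ha

/-- `d 0 1 n = d 0 0 (n-1) - d 0 1 (n-1)`. -/
lemma three (hsp : IsSignedPoset s v) (hα : AlphaSignedDifferential K s v) (n : ℤ) :
    pr K v n (up K s 0) (up K s 1)
      = pr K v (n - 1) (up K s 0) (up K s 0) - pr K v (n - 1) (up K s 0) (up K s 1) := by
  have hfin := hsp.2.2
  have h1 : pr K v n (up K s 0) (up K s 1)
      = pr K v (n - 1) (Dop K s v (up K s 0)) (up K s 0) := pr_up_succ K hsp n 0 0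
  rw [h1, DopUp_even K hsp hα Even.zero, pr_sub_left K hfin,
    show up K s (0 + 1) = up K s 1 from rfl,
    pr_comm K hfin (n - 1) (up K s 1) (up K s 0)]

/-- The main inductive vanishing claim. -/
lemma main (hsp : IsSignedPoset s v) (hα : AlphaSignedDifferential K s v) :
    ∀ n : ℤ,
      (∀ a b : ℕ, 2 ≤ a ∨ 2 ≤ b → pr K v n (up K s a) (up K s b) = 0) ∧
      pr K v n (up K s 1) (up K s 1) = pr K v n (up K s 0) (up K s 1) := by
  have hfin := hsp.2.2
  have key : ∀ N : ℕ, ∀ n : ℤ, n < N →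
      (∀ a b : ℕ, 2 ≤ a ∨ 2 ≤ b → pr K v n (up K s a) (up K s b) = 0) ∧
      pr K v n (up K s 1) (up K s 1) = pr K v n (up K s 0) (up K s 1) := by
    intro N
    induction N with
    | zero =>
      intro n hn
      have hn' : n < 0 := by exact_mod_cast hn
      exact ⟨fun a b _ => pr_empty K hfin hn' _ _,
        by rw [pr_empty K hfin hn', pr_empty K hfin hn']⟩
    | succ N ih =>
      intro n hn
      by_cases hlt : n < N
      · exact ih n hlt
      have IH := ih (n - 1) (by omega)
      have haux : ∀ a b : ℕ, 2 ≤ b → pr K v n (up K s a) (up K s b) = 0 := by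
        intro a b hb
        obtain ⟨b', rfl⟩ : ∃ b', b = b' + 1 := ⟨b - 1, by omega⟩
        have hb' : 1 ≤ b' := by omega
        rw [pr_up_succ K hsp]
        rcases Nat.even_or_odd a with hae | hao
        · rw [DopUp_even K hsp hα hae, pr_sub_left K hfin]
          rcases Nat.lt_or_ge b' 2 with hb2 | hb2
          · have hb1 : b' = 1 := by omega
            subst hb1
            rcases Nat.lt_or_ge a 2 with ha2 | ha2
            · have ha0 : a = 0 := by
                obtain ⟨t, ht⟩ := hae; omega
              subst ha0
              rw [show up K s (0 + 1) = up K s 1 from rfl, IH.2]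
              ring
            · rw [IH.1 a 1 (Or.inl ha2), IH.1 (a + 1) 1 (Or.inl (by omega))]
              ring
          · rw [IH.1 a b' (Or.inr hb2), IH.1 (a + 1) b' (Or.inr hb2)]
            ring
        · rw [DopUp_odd K hsp hα hao, pr_add_left K hfin, pr_sub_left K hfin]
          rcases Nat.lt_or_ge b' 2 with hb2 | hb2
          · have hb1 : b' = 1 := by omega
            subst hb1
            rcases Nat.lt_or_ge a 2 with ha2 | ha2
            · have ha1 : a = 1 := by
                obtain ⟨t, ht⟩ := hao; omega
              subst ha1
              rw [show up K s (1 - 1) = up K s 0 from rfl,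
                show up K s (1 + 1) = up K s 2 from rfl, IH.2,
                IH.1 2 1 (Or.inl le_rfl)]
              ring
            · obtain ⟨t, ht⟩ := hao
              rw [IH.1 (a - 1) 1 (Or.inl (by omega)), IH.1 a 1 (Or.inl ha2),
                IH.1 (a + 1) 1 (Or.inl (by omega))]
              ring
          · rw [IH.1 (a - 1) b' (Or.inr hb2), IH.1 a b' (Or.inr hb2),
              IH.1 (a + 1) b' (Or.inr hb2)]
            ring
      constructor
      · intro a b hab
        rcases hab with ha | hb
        · rw [pr_comm K hfin]
          exact haux b a ha
        · exact haux a b hb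
      · have h1 : pr K v n (up K s 1) (up K s 1)
            = pr K v (n - 1) (Dop K s v (up K s 1)) (up K s 0) := pr_up_succ K hsp n 1 0
        rw [h1, DopUp_odd K hsp hα odd_one, pr_add_left K hfin, pr_sub_left K hfin,
          show up K s (1 - 1) = up K s 0 from rfl,
          show up K s (1 + 1) = up K s 2 from rfl,
          IH.1 2 0 (Or.inl le_rfl),
          pr_comm K hfin (n - 1) (up K s 1) (up K s 0),
          three K hsp hα n]
        ring
  intro n
  exact key (n + 1).toNat n (by omega)

lemma Dpow_one (hsp : IsSignedPoset s v) (hα : AlphaSignedDifferential K s v) :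
    ∀ j : ℕ,
      (Dop K s v)^[2 * j] (fun _ => (1 : K)) = ((-1 : K) ^ j) • up K s (2 * j) ∧
      (Dop K s v)^[2 * j + 1] (fun _ => (1 : K))
        = ((-1 : K) ^ j) • (up K s (2 * j) - up K s (2 * j + 1)) := by
  have hfin := hsp.2.2
  intro j
  induction j with
  | zero =>
    constructor
    · show (Dop K s v)^[0] (fun _ => (1 : K)) = ((-1 : K) ^ 0) • up K s 0
      simp [up_zero]
    · show (Dop K s v)^[1] (fun _ => (1 : K)) = ((-1 : K) ^ 0) • (up K s 0 - up K s 1)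
      rw [Function.iterate_one, Done K hα, pow_zero, one_smul, ← up_zero (K := K) (s := s),
        show Uop K s (up K s 0) = up K s 1 from (up_succ K 0).symm]
  | succ j ih =>
    have h2 : 2 * (j + 1) = (2 * j + 1) + 1 := by ring
    have he : (Dop K s v)^[2 * (j + 1)] (fun _ => (1 : K))
        = ((-1 : K) ^ (j + 1)) • up K s (2 * (j + 1)) := by
      rw [h2, Function.iterate_succ_apply', ih.2, Dop_smul K hfin, Dop_sub K hfin,
        DopUp_even K hsp hα ⟨j, by ring⟩, DopUp_odd K hsp hα ⟨j, rfl⟩,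
        show 2 * j + 1 - 1 = 2 * j from rfl,
        show 2 * j + 1 + 1 = 2 * (j + 1) from by ring]
      have h5 : up K s (2 * j) - up K s (2 * j + 1)
          - (up K s (2 * j) - up K s (2 * j + 1) + up K s (2 * (j + 1)))
          = -(up K s (2 * (j + 1))) := by abel
      rw [h5, smul_neg, pow_succ, mul_comm ((-1 : K) ^ j) (-1 : K), mul_smul, neg_one_smul]
    refine ⟨he, ?_⟩
    rw [Function.iterate_succ_apply', he, Dop_smul K hfin,
      DopUp_even K hsp hα ⟨j + 1, by ring⟩]

lemma tau_eq (hsp : IsSignedPoset s v) (k : ℕ) (n : ℤ) :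
    tau K s v k n = pr K v n (up K s 0) ((Dop K s v)^[k] (fun _ => (1 : K))) := by
  have hfin := hsp.2.2
  unfold SDP.tau pr
  refine finsum_mem_congr rfl fun x hx => ?_
  have hx' : (grade ℕ x : ℤ) = n := hx
  have h1 : (Dop K s v)^[k] (rankIndicator K (n + k)) x
      = (Dop K s v)^[k] (fun _ => (1 : K)) x := by
    apply iterate_congr K hfin
    intro y hy
    unfold SDP.rankIndicator
    rw [if_pos (by omega)]
  rw [h1, up_zero]
  ring

end SDPAux

/-- in an α-signed differential poset, for all `n ≥ 0`:
`τ_{1,n} + τ_{1,n−1} = ∑_{x ∈ Pₙ} v(x)`, and `τ_{k,n} = 0` for every `k ≥ 2`. -/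
theorem statement8 {P : Type*} [PartialOrder P] [OrderBot P] [GradeMinOrder ℕ P]
    (K : Type*) [Field K] [CharZero K]
    (s : P → P → ℤ) (v : P → ℤ)
    (hsp : SDP.IsSignedPoset s v)
    (halpha : SDP.AlphaSignedDifferential K s v) :
    (∀ n : ℕ, SDP.tau K s v 1 (n : ℤ) + SDP.tau K s v 1 ((n : ℤ) - 1)
      = ∑ᶠ x ∈ {x : P | grade ℕ x = n}, (v x : K)) ∧
    (∀ k : ℕ, 2 ≤ k → ∀ n : ℕ, SDP.tau K s v k (n : ℤ) = 0) := by
  classical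
  open SDPAux in
  have hfin := hsp.2.2
  have hD1 : (SDP.Dop K s v)^[1] (fun _ => (1 : K)) = up K s 0 - up K s 1 := by
    rw [Function.iterate_one, Done K halpha, ← up_zero (K := K) (s := s),
      show SDP.Uop K s (up K s 0) = up K s 1 from (up_succ K 0).symm]
  constructor
  · intro n
    have e1 : SDP.tau K s v 1 (n : ℤ)
        = pr K v n (up K s 0) (up K s 0) - pr K v n (up K s 0) (up K s 1) := by
      rw [tau_eq K hsp, hD1, pr_sub_right K hfin]
    have e2 : SDP.tau K s v 1 ((n : ℤ) - 1)
        = pr K v ((n : ℤ) - 1) (up K s 0) (up K s 0)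
          - pr K v ((n : ℤ) - 1) (up K s 0) (up K s 1) := by
      rw [tau_eq K hsp, hD1, pr_sub_right K hfin]
    have e3 := three K hsp halpha (n : ℤ)
    have e4 : pr K v (n : ℤ) (up K s 0) (up K s 0)
        = ∑ᶠ x ∈ {x : P | grade ℕ x = n}, (v x : K) := by
      unfold SDPAux.pr
      rw [show R P ((n : ℕ) : ℤ) = {x : P | grade ℕ x = n} from by
        ext x; simp [SDPAux.R]]
      exact finsum_mem_congr rfl fun x _ => by simp [up_zero]
    rw [e1, e2, e3, ← e4]
    ring
  · intro k hk n
    rw [tau_eq K hsp]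
    rcases Nat.even_or_odd k with hke | hko
    · obtain ⟨j, rfl⟩ := hke
      have hj : 1 ≤ j := by omega
      have h1 : (SDP.Dop K s v)^[j + j] (fun _ => (1 : K))
          = ((-1 : K) ^ j) • up K s (j + j) := by
        have h := (Dpow_one K hsp halpha j).1
        rwa [two_mul] at h
      rw [h1, pr_smul_right K hfin,
        (main K hsp halpha (n : ℤ)).1 0 (j + j) (Or.inr (by omega)), mul_zero]
    · obtain ⟨j, rfl⟩ := hko
      have hj : 1 ≤ j := by omega
      rw [(Dpow_one K hsp halpha j).2, pr_smul_right K hfin, pr_sub_right K hfin,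
        (main K hsp halpha (n : ℤ)).1 0 (2 * j) (Or.inr (by omega)),
        (main K hsp halpha (n : ℤ)).1 0 (2 * j + 1) (Or.inr (by omega))]
      ring
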